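/- (Union bound for the non-RLL sequences.) Let Q > R ≥ 1, ℓ ≥ 1, and n ≥ ℓ be integers, Σ a finite alphabet with |Σ| = Q, and Σ' ⊆ Σ with |Σ'| = R. Then the number of sequences in Σ^n that are NOT ℓ-run-length-limited satisfies |Σ^n \ RLL_{Q,R}(ℓ,n)| ≤ R^ℓ·Q^{n−ℓ} + (n−ℓ)·(Q−R)·R^ℓ·Q^{n−ℓ−1}; equivalently, |RLL_{Q,R}(ℓ,n)| ≥ Q^n·(1 − (R/Q)^ℓ·(1 + (1 − R/Q)·(n−ℓ))). -/

import Mathlib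

open Finset Real

lemma card_filter_forall_mem' {n : ℕ} {σ : Type*} [Fintype σ] [DecidableEq σ]
    (t : Fin n → Finset σ) :
    (Finset.univ.filter fun x : Fin n → σ => ∀ j, x j ∈ t j).card = ∏ j, (t j).card := by
  rw [← Fintype.card_piFinset]
  congr 1
  ext x
  simp [Fintype.mem_piFinset]

lemma prod_ite_mem_card' (R Q : ℕ) (s t : Finset ℕ) (h : t ⊆ s) :
    ∏ a ∈ s, (if a ∈ t then R else Q) = R ^ t.card * Q ^ (s.card - t.card) := by
  rw [Finset.prod_ite, Finset.prod_const, Finset.prod_const]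
  rw [Finset.filter_mem_eq_inter, Finset.inter_eq_right.mpr h]
  congr 2
  have := Finset.card_filter_add_card_filter_not (s := s) (p := (· ∈ t))
  rw [Finset.filter_mem_eq_inter, Finset.inter_eq_right.mpr h] at this
  omega

/-- A sequence `x ∈ Σⁿ` is `ℓ`-run-length-limited if every window of `ℓ`
consecutive symbols contains at least one symbol outside `S'`. -/
def IsRLL {σ : Type*} (S' : Finset σ) (ℓ : ℕ) {n : ℕ} (x : Fin n → σ) : Prop :=
  ∀ i : ℕ, (h : i + ℓ ≤ n) → ∃ k : ℕ, ∃ hk : k < ℓ, x ⟨i + k, by omega⟩ ∉ S'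

/-- Union bound on the number of non-ℓ-RLL sequences, and the resulting
lower bound on the number of ℓ-RLL sequences. -/
theorem rll_union_bound {σ : Type*} [Fintype σ] (Q R ℓ n : ℕ)
    (hR : 1 ≤ R) (hQR : R < Q) (hℓ : 1 ≤ ℓ) (hn : ℓ ≤ n)
    (hσ : Fintype.card σ = Q) (S' : Finset σ) (hS' : S'.card = R) :
    {x : Fin n → σ | ¬ IsRLL S' ℓ x}.ncard ≤
        R ^ ℓ * Q ^ (n - ℓ) + (n - ℓ) * (Q - R) * R ^ ℓ * Q ^ (n - ℓ - 1) ∧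
      (Q : ℝ) ^ n *
          (1 - ((R : ℝ) / Q) ^ ℓ * (1 + (1 - (R : ℝ) / Q) * ((n : ℝ) - (ℓ : ℝ)))) ≤
        ({x : Fin n → σ | IsRLL S' ℓ x}.ncard : ℝ) := by
  classical
  set m := n - ℓ with hm
  -- the bad events
  set t : ℕ → Fin n → Finset σ := fun i j =>
    if 1 ≤ i ∧ j.val = i - 1 then S'ᶜ
    else if j.val ∈ Finset.Ico i (i + ℓ) then S' else Finset.univ with ht
  set B : ℕ → Finset (Fin n → σ) := fun i =>
    Finset.univ.filter fun x => ∀ j, x j ∈ t i j with hB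
  -- cardinality of B 0
  have hB0 : (B 0).card = R ^ ℓ * Q ^ (n - ℓ) := by
    rw [hB, card_filter_forall_mem']
    have h1 : ∀ j : Fin n, (t 0 j).card = if j.val ∈ Finset.Ico 0 (0 + ℓ) then R else Q := by
      intro j
      simp only [ht]
      rw [if_neg (by omega)]
      split_ifs
      · exact hS'
      · rw [Finset.card_univ, hσ]
    rw [Finset.prod_congr rfl (fun j _ => h1 j)]
    rw [Fin.prod_univ_eq_prod_range (fun a => if a ∈ Finset.Ico 0 (0 + ℓ) then R else Q) n]
    rw [prod_ite_mem_card' R Q _ _ (by intro a ha; simp at ha ⊢; omega)]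
    simp
  -- cardinality of B (i+1)
  have hBi : ∀ i : ℕ, i + 1 + ℓ ≤ n →
      (B (i + 1)).card = (Q - R) * (R ^ ℓ * Q ^ (n - ℓ - 1)) := by
    intro i hi
    rw [hB, card_filter_forall_mem']
    have h1 : ∀ j : Fin n, (t (i + 1) j).card =
        (fun a => if a = i then Q - R else
          if a ∈ Finset.Ico (i + 1) (i + 1 + ℓ) then R else Q) j.val := by
      intro j
      simp only [ht]
      by_cases hj : j.val = i
      · rw [if_pos (by omega), if_pos hj, Finset.card_compl, hS', hσ]
      · rw [if_neg (by omega), if_neg hj]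
        split_ifs
        · exact hS'
        · rw [Finset.card_univ, hσ]
    rw [Finset.prod_congr rfl (fun j _ => h1 j)]
    rw [Fin.prod_univ_eq_prod_range (fun a => if a = i then Q - R else
      if a ∈ Finset.Ico (i + 1) (i + 1 + ℓ) then R else Q) n]
    rw [← Finset.mul_prod_erase (Finset.range n) _ (Finset.mem_range.mpr (show i < n by omega))]
    rw [if_pos rfl]
    congr 1
    have h2 : ∀ a ∈ (Finset.range n).erase i,
        (if a = i then Q - R else if a ∈ Finset.Ico (i + 1) (i + 1 + ℓ) then R else Q)
          = if a ∈ Finset.Ico (i + 1) (i + 1 + ℓ) then R else Q := by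
      intro a ha
      rw [if_neg (Finset.mem_erase.mp ha).1]
    rw [Finset.prod_congr rfl h2]
    rw [prod_ite_mem_card' R Q _ _ (by intro a ha; simp at ha ⊢; omega)]
    rw [Nat.card_Ico, Finset.card_erase_of_mem (Finset.mem_range.mpr (by omega)),
      Finset.card_range]
    congr 2 <;> omega
  -- every non-RLL sequence lies in some B i
  have key : ∀ x : Fin n → σ, ¬ IsRLL S' ℓ x → x ∈ (Finset.range (m + 1)).biUnion B := by
    intro x hx
    unfold IsRLL at hx
    push_neg at hx
    set i0 := Nat.find hx with hi0
    obtain ⟨hle, hwin⟩ := Nat.find_spec hx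
    refine Finset.mem_biUnion.mpr ⟨i0, Finset.mem_range.mpr (by omega), ?_⟩
    rw [hB]
    refine Finset.mem_filter.mpr ⟨Finset.mem_univ _, fun j => ?_⟩
    simp only [ht]
    split_ifs with h1 h2
    · -- x j ∈ S'ᶜ : minimality
      obtain ⟨hi1, hjv⟩ := h1
      have hmin := Nat.find_min hx (m := i0 - 1) (by omega)
      push_neg at hmin
      obtain ⟨k, hk, hnot⟩ := hmin (by omega)
      rcases Nat.eq_zero_or_pos k with rfl | hk1
      · have : (⟨i0 - 1 + 0, by omega⟩ : Fin n) = j := Fin.ext (by simp; omega)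
        rw [this] at hnot
        simpa using hnot
      · exfalso
        have h3 := hwin (k - 1) (by omega)
        have : (⟨i0 + (k - 1), by omega⟩ : Fin n) = ⟨i0 - 1 + k, by omega⟩ :=
          Fin.ext (by simp; omega)
        rw [this] at h3
        exact hnot h3
    · -- window
      simp only [Finset.mem_Ico] at h2
      have h3 := hwin (j.val - i0) (by omega)
      have : (⟨i0 + (j.val - i0), by omega⟩ : Fin n) = j := Fin.ext (by simp; omega)
      rwa [this] at h3
    · exact Finset.mem_univ _
  -- part 1 on Finsets
  have hb1 : (Finset.univ.filter fun x : Fin n → σ => ¬ IsRLL S' ℓ x).card ≤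
      R ^ ℓ * Q ^ (n - ℓ) + (n - ℓ) * (Q - R) * R ^ ℓ * Q ^ (n - ℓ - 1) := by
    calc (Finset.univ.filter fun x : Fin n → σ => ¬ IsRLL S' ℓ x).card
        ≤ ((Finset.range (m + 1)).biUnion B).card := by
          apply Finset.card_le_card
          intro x hxmem
          exact key x (Finset.mem_filter.mp hxmem).2
      _ ≤ ∑ i ∈ Finset.range (m + 1), (B i).card := Finset.card_biUnion_le
      _ = (∑ i ∈ Finset.range m, (B (i + 1)).card) + (B 0).card :=
          Finset.sum_range_succ' _ m
      _ = (∑ i ∈ Finset.range m, (Q - R) * (R ^ ℓ * Q ^ (n - ℓ - 1))) + (B 0).card := by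
          congr 1
          refine Finset.sum_congr rfl fun i hi => hBi i ?_
          have := Finset.mem_range.mp hi
          omega
      _ = m * ((Q - R) * (R ^ ℓ * Q ^ (n - ℓ - 1))) + R ^ ℓ * Q ^ (n - ℓ) := by
          rw [Finset.sum_const, hB0, smul_eq_mul, Finset.card_range]
      _ = R ^ ℓ * Q ^ (n - ℓ) + (n - ℓ) * (Q - R) * R ^ ℓ * Q ^ (n - ℓ - 1) := by
          rw [hm]; ring
  have hset1 : {x : Fin n → σ | ¬ IsRLL S' ℓ x} =
      ↑(Finset.univ.filter fun x : Fin n → σ => ¬ IsRLL S' ℓ x) := by ext x; simp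
  have hset2 : {x : Fin n → σ | IsRLL S' ℓ x} =
      ↑(Finset.univ.filter fun x : Fin n → σ => IsRLL S' ℓ x) := by ext x; simp
  constructor
  · rw [hset1, Set.ncard_coe_finset]; exact hb1
  · -- part 2
    rw [hset2, Set.ncard_coe_finset]
    have htotal : (Finset.univ.filter fun x : Fin n → σ => IsRLL S' ℓ x).card +
        (Finset.univ.filter fun x : Fin n → σ => ¬ IsRLL S' ℓ x).card = Q ^ n := by
      rw [Finset.card_filter_add_card_filter_not, Finset.card_univ,
        Fintype.card_fun, hσ, Fintype.card_fin]
    have hQ0 : (Q : ℝ) ≠ 0 := Nat.cast_ne_zero.mpr (by omega)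
    have h2 : ((Finset.univ.filter fun x : Fin n → σ => ¬ IsRLL S' ℓ x).card : ℝ) ≤
        (R : ℝ) ^ ℓ * (Q : ℝ) ^ (n - ℓ) +
          ((n : ℝ) - (ℓ : ℝ)) * ((Q : ℝ) - (R : ℝ)) * (R : ℝ) ^ ℓ * (Q : ℝ) ^ (n - ℓ - 1) := by
      calc ((Finset.univ.filter fun x : Fin n → σ => ¬ IsRLL S' ℓ x).card : ℝ)
          ≤ ((R ^ ℓ * Q ^ (n - ℓ) + (n - ℓ) * (Q - R) * R ^ ℓ * Q ^ (n - ℓ - 1) : ℕ) : ℝ) := by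
            exact_mod_cast hb1
        _ = _ := by push_cast [Nat.cast_sub hn, Nat.cast_sub hQR.le]; ring
    have h1 : ((Finset.univ.filter fun x : Fin n → σ => IsRLL S' ℓ x).card : ℝ) =
        (Q : ℝ) ^ n - ((Finset.univ.filter fun x : Fin n → σ => ¬ IsRLL S' ℓ x).card : ℝ) := by
      have := congrArg (fun k : ℕ => (k : ℝ)) htotal
      push_cast at this
      linarith
    have h3 : (Q : ℝ) ^ n *
        (1 - ((R : ℝ) / Q) ^ ℓ * (1 + (1 - (R : ℝ) / Q) * ((n : ℝ) - (ℓ : ℝ)))) =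
        (Q : ℝ) ^ n - ((R : ℝ) ^ ℓ * (Q : ℝ) ^ (n - ℓ) +
          ((n : ℝ) - (ℓ : ℝ)) * ((Q : ℝ) - (R : ℝ)) * (R : ℝ) ^ ℓ * (Q : ℝ) ^ (n - ℓ - 1)) := by
      rcases eq_or_lt_of_le hn with heq | hlt
      · subst heq
        simp only [Nat.sub_self, pow_zero, Nat.zero_sub]
        have hz : (ℓ : ℝ) - (ℓ : ℝ) = 0 := by ring
        rw [hz]
        rw [div_pow]
        field_simp
        ring
      · obtain ⟨e, rfl⟩ : ∃ e, n = ℓ + 1 + e := ⟨n - ℓ - 1, by omega⟩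
        rw [show ℓ + 1 + e - ℓ - 1 = e by omega, show ℓ + 1 + e - ℓ = e + 1 by omega,
          show ((ℓ + 1 + e : ℕ) : ℝ) - (ℓ : ℝ) = (e : ℝ) + 1 by push_cast; ring]
        rw [div_pow]
        field_simp
        ring
    rw [h3]
    linarith
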